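/- Let n > 0 and let 0 < y1 < y2. Suppose Y is continuously differentiable on [y1, y2], twice differentiable on (y1, y2), satisfies Y''(y) = −(1/(n+3))·y·N_n(Y(y)) on (y1, y2), Y'(y1) = Y'(y2) = 0, and Y is not identically zero on [y1, y2]. Then y2·|Y(y2)|^{(n+2)/(n+1)} > y1·|Y(y1)|^{(n+2)/(n+1)}; in particular, if Y(y1) ≠ 0 then ( |Y(y2)| / |Y(y1)| )^{(n+2)/(n+1)} > y1/y2. -/

import Mathlib

/-- The odd power nonlinearity `N_n(Y) = |Y|^{-n/(n+1)}·Y` (with `N_n(0) = 0`). -/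
noncomputable def Nn (n Y : ℝ) : ℝ := |Y| ^ (-(n / (n + 1))) * Y

/-- A priori bound on the oscillations of the first nonlinear
eigenfunction (`k = 1`, `l = 0`): if `0 < y1 < y2` are critical points of a
C¹ solution `Y` (with derivative `Y'` and second derivative `Y''` on `(y1,y2)`)
of `Y'' = -(1/(n+3))·y·N_n(Y)`, and `Y` is not identically zero on `[y1,y2]`,
then `y2·|Y(y2)|^{(n+2)/(n+1)} > y1·|Y(y1)|^{(n+2)/(n+1)}`. -/
theorem stmt7 (n y1 y2 : ℝ) (hn : 0 < n) (hy1 : 0 < y1) (h12 : y1 < y2)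
    (Y Y' Y'' : ℝ → ℝ)
    (hY : ∀ y ∈ Set.Icc y1 y2, HasDerivWithinAt Y (Y' y) (Set.Icc y1 y2) y)
    (hY'cont : ContinuousOn Y' (Set.Icc y1 y2))
    (hY'' : ∀ y ∈ Set.Ioo y1 y2, HasDerivAt Y' (Y'' y) y)
    (heq : ∀ y ∈ Set.Ioo y1 y2, Y'' y = -(1 / (n + 3)) * y * Nn n (Y y))
    (hb1 : Y' y1 = 0) (hb2 : Y' y2 = 0)
    (hnz : ∃ y ∈ Set.Icc y1 y2, Y y ≠ 0) :
    y1 * |Y y1| ^ ((n + 2) / (n + 1)) < y2 * |Y y2| ^ ((n + 2) / (n + 1)) ∧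
    (Y y1 ≠ 0 → y1 / y2 < (|Y y2| / |Y y1|) ^ ((n + 2) / (n + 1))) := by
  set p : ℝ := (n + 2) / (n + 1) with hpdef
  have hn1 : (0:ℝ) < n + 1 := by linarith
  have hp1 : 1 < p := by
    rw [hpdef, lt_div_iff₀ hn1]; linarith
  have hpexp : p - 2 = -(n / (n + 1)) := by
    rw [hpdef]; field_simp; ring
  have hNn : ∀ x : ℝ, Nn n x = |x| ^ (p - 2) * x := by
    intro x; rw [Nn, hpexp]
  set c : ℝ := (n + 1) / ((n + 2) * (n + 3)) with hcdef
  have hc : (0:ℝ) < c := by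
    rw [hcdef]; positivity
  have hcp : c * p = 1 / (n + 3) := by
    rw [hcdef, hpdef]; field_simp
  set G : ℝ → ℝ := fun t => (1/2) * (Y' t)^2 + c * (t * |Y t| ^ p) with hGdef
  -- derivative of Y at interior points
  have hYat : ∀ y ∈ Set.Ioo y1 y2, HasDerivAt Y (Y' y) y := by
    intro y hy
    exact (hY y (Set.Ioo_subset_Icc_self hy)).hasDerivAt (Icc_mem_nhds hy.1 hy.2)
  have hGderiv : ∀ y ∈ Set.Ioo y1 y2, HasDerivAt G (c * |Y y| ^ p) y := by
    intro y hy
    have hA : HasDerivAt (fun t => (1/2) * (Y' t)^2)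
        ((1/2) * (2 * (Y' y) ^ 1 * Y'' y)) y :=
      ((hY'' y hy).pow 2).const_mul (1/2)
    have hB : HasDerivAt (fun t => |Y t| ^ p)
        ((p * |Y y| ^ (p - 2) * Y y) * Y' y) y :=
      (hasDerivAt_abs_rpow (Y y) hp1).comp y (hYat y hy)
    have hC : HasDerivAt (fun t => t * |Y t| ^ p)
        (1 * |Y y| ^ p + y * ((p * |Y y| ^ (p - 2) * Y y) * Y' y)) y :=
      (hasDerivAt_id y).mul hB
    have hD := hA.add (hC.const_mul c)
    refine hD.congr_deriv ?_
    rw [heq y hy, hNn, ← hcp]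
    ring
  -- continuity of G on the closed interval
  have hYcont : ContinuousOn Y (Set.Icc y1 y2) := fun y hy => (hY y hy).continuousWithinAt
  have hGcont : ContinuousOn G (Set.Icc y1 y2) := by
    apply ContinuousOn.add
    · exact continuousOn_const.mul (hY'cont.pow 2)
    · exact continuousOn_const.mul (continuousOn_id.mul
        ((hYcont.abs).rpow_const (fun x _ => Or.inr (by linarith))))
  -- monotonicity of G
  have hmono : MonotoneOn G (Set.Icc y1 y2) := by
    apply monotoneOn_of_deriv_nonneg (convex_Icc y1 y2) hGcont
    · intro x hx
      rw [interior_Icc] at hx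
      exact (hGderiv x hx).differentiableAt.differentiableWithinAt
    · intro x hx
      rw [interior_Icc] at hx
      rw [(hGderiv x hx).deriv]
      positivity
  -- find an interior point where Y ≠ 0
  obtain ⟨t0, ht0, hYt0⟩ : ∃ t0 ∈ Set.Ioo y1 y2, Y t0 ≠ 0 := by
    obtain ⟨ys, hys, hYys⟩ := hnz
    have hne : (nhdsWithin ys (Set.Ioo y1 y2)).NeBot := by
      rw [← mem_closure_iff_nhdsWithin_neBot, closure_Ioo h12.ne]
      exact hys
    have hev : ∀ᶠ t in nhdsWithin ys (Set.Ioo y1 y2), Y t ≠ 0 := by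
      apply Filter.Eventually.filter_mono (nhdsWithin_mono ys Set.Ioo_subset_Icc_self)
      exact (hYcont ys hys).eventually_ne hYys
    have := hev.and self_mem_nhdsWithin
    obtain ⟨t0, h1, h2⟩ := this.exists
    exact ⟨t0, h2, h1⟩
  -- a small interval to the right of t0 where Y ≠ 0
  have hcontY : ContinuousAt Y t0 := (hYat t0 ht0).continuousAt
  have hev : ∀ᶠ t in nhds t0, Y t ≠ 0 ∧ t ∈ Set.Ioo y1 y2 :=
    (hcontY.eventually_ne hYt0).and (isOpen_Ioo.eventually_mem ht0)
  obtain ⟨ε, hε, hball⟩ := Metric.eventually_nhds_iff.1 hev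
  set b : ℝ := t0 + ε / 2 with hbdef
  have ht0b : t0 < b := by rw [hbdef]; linarith
  have hball' : ∀ t ∈ Set.Icc t0 b, Y t ≠ 0 ∧ t ∈ Set.Ioo y1 y2 := by
    intro t ht
    apply hball
    rw [Real.dist_eq, abs_lt]
    have h2 : t ≤ t0 + ε / 2 := by rw [← hbdef]; exact ht.2
    exact ⟨by linarith [ht.1], by linarith⟩
  have hbIoo : b ∈ Set.Ioo y1 y2 := (hball' b ⟨ht0b.le, le_refl b⟩).2
  have hsub : Set.Icc t0 b ⊆ Set.Icc y1 y2 :=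
    Set.Icc_subset_Icc ht0.1.le hbIoo.2.le
  -- strict monotonicity on [t0, b]
  have hstrict : StrictMonoOn G (Set.Icc t0 b) := by
    apply strictMonoOn_of_deriv_pos (convex_Icc t0 b) (hGcont.mono hsub)
    intro x hx
    rw [interior_Icc] at hx
    have hxmem : x ∈ Set.Icc t0 b := Set.Ioo_subset_Icc_self hx
    obtain ⟨hYx, hxIoo⟩ := hball' x hxmem
    rw [(hGderiv x hxIoo).deriv]
    have : (0:ℝ) < |Y x| := abs_pos.2 hYx
    positivity
  -- chain of inequalities
  have hG12 : G y1 < G y2 := by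
    calc G y1 ≤ G t0 := hmono (Set.left_mem_Icc.2 (le_of_lt h12))
                (Set.Ioo_subset_Icc_self ht0) ht0.1.le
    _ < G b := hstrict (Set.left_mem_Icc.2 ht0b.le) (Set.right_mem_Icc.2 ht0b.le) ht0b
    _ ≤ G y2 := hmono (hsub (Set.right_mem_Icc.2 ht0b.le))
                (Set.right_mem_Icc.2 (le_of_lt h12)) hbIoo.2.le
  have hGval : c * (y1 * |Y y1| ^ p) < c * (y2 * |Y y2| ^ p) := by
    have e1 : G y1 = c * (y1 * |Y y1| ^ p) := by rw [hGdef]; simp [hb1]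
    have e2 : G y2 = c * (y2 * |Y y2| ^ p) := by rw [hGdef]; simp [hb2]
    rw [← e1, ← e2]; exact hG12
  have hmain : y1 * |Y y1| ^ p < y2 * |Y y2| ^ p := (mul_lt_mul_iff_right₀ hc).1 hGval
  refine ⟨hmain, fun hY1 => ?_⟩
  have hA : (0:ℝ) < |Y y1| ^ p := Real.rpow_pos_of_pos (abs_pos.2 hY1) p
  rw [Real.div_rpow (abs_nonneg _) (abs_nonneg _)]
  rw [div_lt_div_iff₀ (by linarith) hA]
  linarith [hmain]
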